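/- arXiv:1409.4667 — 2 statements merged into one kernel-verified Lean document; each statement's English description precedes it below -/
import Mathlib

section
/- Let ν be a Borel probability measure on a complete separable metric space X. Then there exists a measurable map T from the Cantor space {0,1}^ℕ, equipped with the standard uniform (coin-flipping) measure P, to X such that the pushforward of P under T equals ν. -/
open MeasureTheory Set Filter Topology Finset ProbabilityTheory
open scoped ENNReal


noncomputable def Vb12 {n : ℕ} (b : Fin n → Bool) : ℝ :=
  ∑ i : Fin n, if b i then (2:ℝ)⁻¹ ^ ((i:ℕ)+1) else 0

def Nb12 {n : ℕ} (b : Fin n → Bool) : ℕ :=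
  ∑ i : Fin n, (if b i then 1 else 0) * 2 ^ (n - 1 - (i:ℕ))

def Eb12 {n : ℕ} (b : Fin n → Bool) : Fin (2^n) :=
  finFunctionFinEquiv (fun i => if b i.rev then 1 else 0)

lemma Eb12_val {n : ℕ} (b : Fin n → Bool) : (Eb12 b : ℕ) = Nb12 b := by
  rw [Eb12, finFunctionFinEquiv_apply, Nb12]
  have := Equiv.sum_comp (Fin.revPerm (n := n))
    (fun i => (if b i then 1 else 0) * 2 ^ (n - 1 - (i:ℕ)))
  rw [← this]
  refine Finset.sum_congr rfl fun i _ => ?_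
  have hlt : (i : ℕ) < n := i.isLt
  have h2 : n - 1 - ((i.rev : Fin n) : ℕ) = (i : ℕ) := by
    rw [Fin.val_rev]; omega
  by_cases h : b i.rev <;> simp [h, Fin.revPerm_apply, h2] <;> omega

lemma Eb12_inj {n : ℕ} : Function.Injective (Eb12 (n := n)) := by
  intro b b' h
  rw [Eb12, Eb12] at h
  have h2 := finFunctionFinEquiv.injective h
  funext j
  have h3 := congrFun h2 j.rev
  simp only [Fin.rev_rev] at h3
  by_cases hb : b j <;> by_cases hb' : b' j <;> simp_all

lemma Nb12_inj {n : ℕ} : Function.Injective (Nb12 (n := n)) := by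
  intro b b' h
  exact Eb12_inj (Fin.val_injective (by rw [Eb12_val, Eb12_val, h]))

lemma Nb12_surj {n : ℕ} (k : ℕ) (hk : k < 2^n) : ∃ b : Fin n → Bool, Nb12 b = k := by
  set g : Fin n → Fin 2 := finFunctionFinEquiv.symm ⟨k, hk⟩ with hg
  refine ⟨fun j => if g j.rev = 1 then true else false, ?_⟩
  have hfun : (fun i : Fin n =>
      if (if g i.rev.rev = 1 then true else false) = true then (1:Fin 2) else 0) = g := by
    funext i
    rw [Fin.rev_rev]
    by_cases h : g i = 1
    · simp [h]
    · simp only [h, if_false]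
      have hv : ∀ v : Fin 2, v ≠ 1 → ((if (false = true) then (1:Fin 2) else 0) = v) := by decide
      exact hv _ h
  have hE : Eb12 (fun j : Fin n => if g j.rev = 1 then true else false) = ⟨k, hk⟩ := by
    simp only [Eb12]
    rw [hfun, hg, Equiv.apply_symm_apply]
  rw [← Eb12_val, hE]

lemma Vb12_eq {n : ℕ} (b : Fin n → Bool) : (2:ℝ)^n * Vb12 b = Nb12 b := by
  rw [Vb12, Nb12, Finset.mul_sum, Nat.cast_sum]
  refine Finset.sum_congr rfl fun i _ => ?_
  have hi : (i : ℕ) < n := i.isLt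
  have hsub : (n - 1 - (i:ℕ)) + ((i:ℕ)+1) = n := by omega
  by_cases h : b i
  · simp only [h, if_true, Nat.cast_mul, Nat.cast_pow, Nat.cast_one, one_mul]
    rw [show (2:ℝ)^n = 2 ^ (n - 1 - (i:ℕ)) * 2 ^ ((i:ℕ)+1) by rw [← pow_add, hsub]]
    rw [mul_assoc, ← mul_pow]
    norm_num
  · simp [h]

section Main
lemma cantor_to_unif (P : Measure (ℕ → Bool)) [IsProbabilityMeasure P]
    (hP : ∀ (n : ℕ) (b : Fin n → Bool),
      P {ω | ∀ i : Fin n, ω i = b i} = (1 / 2 : ENNReal) ^ n) :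
    ∃ h : (ℕ → Bool) → ℝ, Measurable h ∧ P.map h = volume.restrict (Icc (0:ℝ) 1) := by
  classical
  set t : (ℕ → Bool) → ℕ → ℝ := fun ω n => if ω n then (2:ℝ)⁻¹ ^ (n+1) else 0 with ht
  have ht_nonneg : ∀ ω n, 0 ≤ t ω n := by
    intro ω n; rw [ht]; dsimp only; split <;> positivity
  have ht_le : ∀ ω n, t ω n ≤ (2:ℝ)⁻¹ ^ (n+1) := by
    intro ω n; rw [ht]; dsimp only; split
    · exact le_rfl
    · positivity
  have S0 : Summable fun n : ℕ => (2:ℝ)⁻¹ ^ (n+1) := by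
    simpa [pow_succ] using
      (summable_geometric_of_lt_one (r := (2:ℝ)⁻¹) (by norm_num) (by norm_num)).mul_right (2:ℝ)⁻¹
  have hsummable : ∀ ω, Summable (t ω) := fun ω =>
    Summable.of_nonneg_of_le (ht_nonneg ω) (ht_le ω) S0
  set h : (ℕ → Bool) → ℝ := fun ω => ∑' n, t ω n with hh
  -- tail sum identity
  have htail : ∀ n : ℕ, ∑' i : ℕ, (2:ℝ)⁻¹ ^ (n+i+1) = (2:ℝ)⁻¹ ^ n := by
    intro n
    have h1 : ∀ i : ℕ, (2:ℝ)⁻¹ ^ (n+i+1) = (2:ℝ)⁻¹^(n+1) * (2:ℝ)⁻¹^i := by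
      intro i; rw [← pow_add]; ring_nf
    rw [tsum_congr h1, tsum_mul_left, tsum_geometric_of_lt_one (by norm_num) (by norm_num),
      pow_succ]
    norm_num
    ring
  set restr : ∀ n : ℕ, (ℕ → Bool) → (Fin n → Bool) := fun n ω i => ω i with hrestr
  have hV : ∀ (n : ℕ) (ω), Vb12 (restr n ω) = ∑ i ∈ Finset.range n, t ω i := by
    intro n ω
    rw [Vb12, Fin.sum_univ_eq_sum_range (fun i => if ω i then (2:ℝ)⁻¹ ^ (i+1) else 0) n]
  have hlow : ∀ (n : ℕ) (ω), Vb12 (restr n ω) ≤ h ω := by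
    intro n ω
    rw [hV, hh]
    dsimp only
    rw [← (hsummable ω).sum_add_tsum_nat_add n]
    have : 0 ≤ ∑' i, t ω (i + n) := tsum_nonneg fun i => ht_nonneg ω _
    linarith
  have hup : ∀ (n : ℕ) (ω), h ω ≤ Vb12 (restr n ω) + (2:ℝ)⁻¹ ^ n := by
    intro n ω
    rw [hV, hh]
    dsimp only
    rw [← (hsummable ω).sum_add_tsum_nat_add n]
    have hs2 : Summable fun i : ℕ => (2:ℝ)⁻¹ ^ (n+i+1) := by
      have h1 : (fun i : ℕ => (2:ℝ)⁻¹ ^ (n+i+1)) = fun i => (2:ℝ)⁻¹^(n+1) * (2:ℝ)⁻¹^i := by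
        funext i; rw [← pow_add]; ring_nf
      rw [h1]
      exact (summable_geometric_of_lt_one (by norm_num) (by norm_num)).mul_left _
    have h2 : ∑' i, t ω (i + n) ≤ ∑' i : ℕ, (2:ℝ)⁻¹ ^ (n+i+1) := by
      refine Summable.tsum_le_tsum (fun i => ?_) ((hsummable ω).comp_injective (add_left_injective n)) hs2
      have := ht_le ω (i + n)
      have he : i + n + 1 = n + i + 1 := by omega
      rw [he] at this
      exact this
    rw [htail n] at h2
    linarith
  have h_nonneg : ∀ ω, 0 ≤ h ω := fun ω => tsum_nonneg (ht_nonneg ω)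
  have h_le_one : ∀ ω, h ω ≤ 1 := by
    intro ω
    have := hup 0 ω
    have h0 : Vb12 (restr 0 ω) = 0 := by simp [Vb12]
    rw [h0, zero_add, pow_zero] at this
    exact this
  have hmeas : Measurable h := by
    refine measurable_of_tendsto_metrizable
      (f := fun N ω => ∑ i ∈ Finset.range N, t ω i) (fun N => ?_) ?_
    · refine Finset.measurable_sum _ fun i _ => ?_
      exact (measurable_of_countable (fun bb : Bool => if bb then (2:ℝ)⁻¹ ^ (i+1) else 0)).comp
        (measurable_pi_apply i)
    · rw [tendsto_pi_nhds]
      intro ω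
      exact (hsummable ω).hasSum.tendsto_sum_nat
  -- cylinder measure computation
  have key : ∀ (n : ℕ) (c w : ℝ),
      P {ω | Vb12 (restr n ω) + w ≤ c} =
        ((Finset.univ.filter (fun b : Fin n → Bool => Vb12 b + w ≤ c)).card : ℝ≥0∞)
          * (1 / 2 : ℝ≥0∞) ^ n := by
    intro n c w
    set S := Finset.univ.filter (fun b : Fin n → Bool => Vb12 b + w ≤ c) with hs
    have hset : {ω | Vb12 (restr n ω) + w ≤ c}
        = ⋃ b ∈ S, {ω : ℕ → Bool | ∀ i : Fin n, ω i = b i} := by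
      ext ω
      simp only [mem_setOf_eq, mem_iUnion, Finset.mem_filter, Finset.mem_univ, true_and, hs,
        exists_prop]
      constructor
      · intro hω
        exact ⟨restr n ω, hω, fun i => rfl⟩
      · rintro ⟨b, hb, hωb⟩
        have hrb : restr n ω = b := funext hωb
        rw [hrb]; exact hb
    have hdisj : (S : Set (Fin n → Bool)).PairwiseDisjoint
        (fun b => {ω : ℕ → Bool | ∀ i : Fin n, ω i = b i}) := by
      intro b _ b' _ hbb'
      refine Set.disjoint_left.2 ?_
      intro ω hω hω'
      exact hbb' (funext fun i => by rw [← hω i, ← hω' i])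
    have hmeasC : ∀ b : Fin n → Bool, MeasurableSet {ω : ℕ → Bool | ∀ i : Fin n, ω i = b i} := by
      intro b
      have : {ω : ℕ → Bool | ∀ i : Fin n, ω i = b i}
          = ⋂ i : Fin n, (fun ω : ℕ → Bool => ω i) ⁻¹' {b i} := by
        ext ω; simp [Set.mem_iInter]
      rw [this]
      exact MeasurableSet.iInter fun i => (measurable_pi_apply _) (measurableSet_singleton _)
    rw [hset, measure_biUnion_finset hdisj fun b _ => hmeasC b]
    rw [Finset.sum_congr rfl fun b _ => hP n b, Finset.sum_const, nsmul_eq_mul]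
  have hIic : ∀ x : ℝ, 0 ≤ x → x < 1 → P {ω | h ω ≤ x} = ENNReal.ofReal x := by
    intro x hx0 hx1
    have hAne : P {ω | h ω ≤ x} ≠ ⊤ := measure_ne_top _ _
    have hbound : ∀ n : ℕ, |(P {ω | h ω ≤ x}).toReal - x| ≤ (2:ℝ)⁻¹ ^ n := by
      intro n
      have hpow_pos : (0:ℝ) < 2 ^ n := by positivity
      have hpowinv : (2:ℝ)^n * (2:ℝ)⁻¹^n = 1 := by rw [← mul_pow]; norm_num
      have hsubU : {ω | h ω ≤ x} ⊆ {ω | Vb12 (restr n ω) + 0 ≤ x} := by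
        intro ω hω
        simp only [mem_setOf_eq, add_zero]
        exact (hlow n ω).trans hω
      have hsubL : {ω | Vb12 (restr n ω) + (2:ℝ)⁻¹ ^ n ≤ x} ⊆ {ω | h ω ≤ x} := by
        intro ω hω
        exact (hup n ω).trans hω
      set cU := (Finset.univ.filter (fun b : Fin n → Bool => Vb12 b + 0 ≤ x)).card with hcU'
      set cL := (Finset.univ.filter
        (fun b : Fin n → Bool => Vb12 b + (2:ℝ)⁻¹ ^ n ≤ x)).card with hcL'
      have hNle : ∀ b : Fin n → Bool, Vb12 b + 0 ≤ x → Nb12 b < ⌊x * 2^n⌋₊ + 1 := by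
        intro b hb
        rw [add_zero] at hb
        refine Nat.lt_succ_of_le (Nat.le_floor ?_)
        rw [← Vb12_eq]
        nlinarith
      have hcUle : (cU : ℝ) ≤ x * 2^n + 1 := by
        have h1 : cU ≤ ⌊x * 2^n⌋₊ + 1 := by
          rw [hcU']
          have h2 := Finset.card_le_card_of_injOn
            (s := Finset.univ.filter (fun b : Fin n → Bool => Vb12 b + 0 ≤ x))
            (t := Finset.range (⌊x * 2^n⌋₊ + 1)) Nb12
            (fun b hb => Finset.mem_range.2 (hNle b (Finset.mem_filter.1 hb).2))
            (Nb12_inj.injOn)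
          simpa using h2
        calc (cU:ℝ) ≤ ((⌊x * 2^n⌋₊ + 1 : ℕ) : ℝ) := by exact_mod_cast h1
          _ ≤ x * 2^n + 1 := by
            push_cast
            have := Nat.floor_le (by positivity : (0:ℝ) ≤ x * 2^n)
            linarith
      have hcLge : x * 2^n - 1 ≤ (cL : ℝ) := by
        set M := ⌊x * 2^n⌋₊ with hM
        have hMle : (M:ℝ) ≤ x * 2^n := Nat.floor_le (by positivity)
        have hklt : ∀ k, k < M → k < 2^n := by
          intro k hk
          have hxlt : x * 2^n < 2^n := by nlinarith
          have h1 : (k:ℝ) < 2^n := by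
            have h2 : ((k:ℝ)) < M := by exact_mod_cast hk
            linarith
          exact_mod_cast h1
        have hML : M ≤ cL := by
          rw [hcL']
          have h2 := Finset.card_le_card_of_injOn
            (f := fun k => if hk : k < 2^n then (Nb12_surj k hk).choose else (fun _ => false))
            (s := Finset.range M)
            (t := Finset.univ.filter (fun b : Fin n → Bool => Vb12 b + (2:ℝ)⁻¹ ^ n ≤ x))
            ?_ ?_
          · simpa using h2
          · intro k hk
            have hk2 : k < 2^n := hklt k (Finset.mem_range.1 hk)
            dsimp only
            rw [dif_pos hk2]
            refine Finset.mem_filter.2 ⟨Finset.mem_univ _, ?_⟩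
            have hNb : Nb12 (Nb12_surj k hk2).choose = k := (Nb12_surj k hk2).choose_spec
            have hVb : (2:ℝ)^n * Vb12 (Nb12_surj k hk2).choose = k := by rw [Vb12_eq, hNb]
            have hk1 : (k:ℝ) + 1 ≤ x * 2^n := by
              have h3 : k + 1 ≤ M := Finset.mem_range.1 hk
              have h4 : ((k:ℝ)) + 1 ≤ M := by exact_mod_cast h3
              linarith
            nlinarith [hVb, hpowinv, hpow_pos]
          · intro k1 hk1 k2 hk2 heq
            have h1 : k1 < 2^n := hklt k1 (Finset.mem_range.1 hk1)
            have h2 : k2 < 2^n := hklt k2 (Finset.mem_range.1 hk2)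
            dsimp only at heq
            rw [dif_pos h1, dif_pos h2] at heq
            rw [← (Nb12_surj k1 h1).choose_spec, ← (Nb12_surj k2 h2).choose_spec, heq]
        have h5 : x*2^n - 1 < (M:ℝ) := Nat.sub_one_lt_floor (x * 2^n)
        have h6 : (M:ℝ) ≤ cL := by exact_mod_cast hML
        linarith
      have hmu_up : P {ω | h ω ≤ x} ≤ (cU : ENNReal) * (1/2 : ENNReal)^n := by
        rw [hcU', ← key n x 0]
        exact measure_mono hsubU
      have hmu_lo : (cL : ENNReal) * (1/2 : ENNReal)^n ≤ P {ω | h ω ≤ x} := by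
        rw [hcL', ← key n x ((2:ℝ)⁻¹^n)]
        exact measure_mono hsubL
      have hfin : ∀ m : ℕ, ((m : ENNReal) * (1/2 : ENNReal)^n) ≠ ⊤ := by
        intro m
        exact ENNReal.mul_ne_top (ENNReal.natCast_ne_top m) (ENNReal.pow_ne_top (by norm_num))
      have htoReal : ∀ m : ℕ, ((m : ENNReal) * (1/2 : ENNReal)^n).toReal = m * (2:ℝ)⁻¹^n := by
        intro m
        rw [ENNReal.toReal_mul, ENNReal.toReal_pow, ENNReal.toReal_natCast]
        norm_num
      have hup' : (P {ω | h ω ≤ x}).toReal ≤ cU * (2:ℝ)⁻¹^n := by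
        have h7 := ENNReal.toReal_mono (hfin cU) hmu_up
        rwa [htoReal] at h7
      have hlo' : (cL:ℝ) * (2:ℝ)⁻¹^n ≤ (P {ω | h ω ≤ x}).toReal := by
        have h7 := ENNReal.toReal_mono hAne hmu_lo
        rwa [htoReal] at h7
      rw [abs_le]
      have hinv_pos : (0:ℝ) < (2:ℝ)⁻¹^n := by positivity
      constructor
      · have h8 : (x*2^n - 1) * (2:ℝ)⁻¹^n ≤ cL * (2:ℝ)⁻¹^n :=
          mul_le_mul_of_nonneg_right hcLge (by positivity)
        nlinarith [hpowinv]
      · have h8 : (cU:ℝ) * (2:ℝ)⁻¹^n ≤ (x*2^n + 1) * (2:ℝ)⁻¹^n :=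
          mul_le_mul_of_nonneg_right hcUle (by positivity)
        nlinarith [hpowinv]
    have hsq : (P {ω | h ω ≤ x}).toReal = x := by
      have htend : Tendsto (fun n : ℕ => (2:ℝ)⁻¹^n) atTop (nhds 0) := by
        refine tendsto_pow_atTop_nhds_zero_of_lt_one (by norm_num) (by norm_num)
      have h9 : |(P {ω | h ω ≤ x}).toReal - x| ≤ 0 := ge_of_tendsto' htend hbound
      have h10 := le_antisymm h9 (abs_nonneg _)
      have := abs_eq_zero.1 h10
      linarith [this]
    rw [← ENNReal.ofReal_toReal hAne, hsq]
  refine ⟨h, hmeas, ?_⟩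
  have hprob1 : (volume.restrict (Icc (0:ℝ) 1)) Set.univ = 1 := by
    rw [Measure.restrict_apply_univ, Real.volume_Icc]; norm_num
  haveI : IsProbabilityMeasure (volume.restrict (Icc (0:ℝ) 1)) := ⟨hprob1⟩
  haveI : IsProbabilityMeasure (P.map h) := Measure.isProbabilityMeasure_map hmeas.aemeasurable
  refine Measure.ext_of_Iic _ _ fun x => ?_
  rw [Measure.map_apply hmeas measurableSet_Iic, Measure.restrict_apply measurableSet_Iic]
  rcases lt_or_ge x 0 with hx | hx
  · have h1 : h ⁻¹' Iic x = ∅ := by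
      refine eq_empty_of_forall_notMem fun ω hω => ?_
      have h3 : h ω ≤ x := hω
      linarith [h_nonneg ω]
    have h2 : Iic x ∩ Icc (0:ℝ) 1 = ∅ := by
      refine eq_empty_of_forall_notMem fun y hy => ?_
      have h3 : y ≤ x := hy.1
      have h4 : 0 ≤ y := hy.2.1
      linarith
    rw [h1, h2]
    simp
  · rcases lt_or_ge x 1 with hx1 | hx1
    · have h1 : h ⁻¹' Iic x = {ω | h ω ≤ x} := rfl
      rw [h1, hIic x hx hx1]
      have h2 : Iic x ∩ Icc (0:ℝ) 1 = Icc 0 x := by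
        ext y
        constructor
        · rintro ⟨a, b, c⟩; exact ⟨b, a⟩
        · rintro ⟨a, b⟩; exact ⟨b, a, by linarith⟩
      rw [h2, Real.volume_Icc, sub_zero]
    · have h1 : h ⁻¹' Iic x = Set.univ := by
        refine eq_univ_of_forall fun ω => ?_
        show h ω ≤ x
        exact (h_le_one ω).trans hx1
      have h2 : Iic x ∩ Icc (0:ℝ) 1 = Set.Icc (0:ℝ) 1 := by
        rw [Set.inter_eq_right]
        exact fun y hy => le_trans hy.2 hx1
      rw [h1, h2, Real.volume_Icc, measure_univ]
      norm_num
end Main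



lemma inv_transform (ρ : Measure ℝ) [IsProbabilityMeasure ρ] :
    ∃ Q : ℝ → ℝ, Measurable Q ∧ (volume.restrict (Icc (0:ℝ) 1)).map Q = ρ := by
  classical
  set F : ℝ → ℝ := fun x => cdf ρ x with hF
  set S : ℝ → Set ℝ := fun p => {y | p ≤ F y} with hS
  have hFmono : Monotone F := (cdf ρ).mono
  have hSne : ∀ p : ℝ, p < 1 → (S p).Nonempty := fun p hp =>
    ((tendsto_cdf_atTop ρ).eventually (eventually_ge_nhds hp)).exists
  have hSbdd : ∀ p : ℝ, 0 < p → BddBelow (S p) := by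
    intro p hp
    obtain ⟨y, hy⟩ := ((tendsto_cdf_atBot ρ).eventually (eventually_lt_nhds hp)).exists
    exact ⟨y, fun z hz => by
      by_contra h
      exact absurd (hz.trans (hFmono (le_of_not_ge h))) (not_le.2 hy)⟩
  -- p ≤ F (sInf (S p))
  have hmem : ∀ p : ℝ, 0 < p → p < 1 → p ≤ F (sInf (S p)) := by
    intro p hp0 hp1
    obtain ⟨u, humono, hulim, humem⟩ := exists_seq_tendsto_sInf (hSne p hp1) (hSbdd p hp0)
    have hcont : ContinuousWithinAt F (Ici (sInf (S p))) (sInf (S p)) :=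
      (cdf ρ).right_continuous _
    have : Tendsto (F ∘ u) atTop (𝓝 (F (sInf (S p)))) := by
      refine hcont.tendsto.comp (tendsto_nhdsWithin_iff.2 ⟨hulim, ?_⟩)
      exact Eventually.of_forall fun n => csInf_le (hSbdd p hp0) (humem n)
    exact ge_of_tendsto' this fun n => humem n
  have hkey : ∀ p ∈ Ioo (0:ℝ) 1, ∀ x : ℝ, (sInf (S p) ≤ x ↔ p ≤ F x) := by
    intro p hp x
    constructor
    · intro h; exact (hmem p hp.1 hp.2).trans (hFmono h)
    · intro h; exact csInf_le (hSbdd p hp.1) h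
  set Q : ℝ → ℝ := fun p => if p ∈ Ioo (0:ℝ) 1 then sInf (S p) else 0 with hQ
  have hF01 : ∀ x, 0 ≤ F x ∧ F x ≤ 1 := fun x => ⟨cdf_nonneg ρ x, cdf_le_one ρ x⟩
  have hpre : ∀ x : ℝ, Q ⁻¹' Iic x =
      (Ioo (0:ℝ) 1 ∩ Iic (F x)) ∪ ((Ioo (0:ℝ) 1)ᶜ ∩ {p | (0:ℝ) ≤ x}) := by
    intro x
    ext p
    by_cases hp : p ∈ Ioo (0:ℝ) 1
    · simp only [Set.mem_preimage, Set.mem_Iic, Set.mem_union, Set.mem_inter_iff, Set.mem_compl_iff,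
        Set.mem_setOf_eq, hQ, if_pos hp]
      rw [hkey p hp x]
      tauto
    · simp only [Set.mem_preimage, Set.mem_Iic, Set.mem_union, Set.mem_inter_iff, Set.mem_compl_iff,
        Set.mem_setOf_eq, hQ, if_neg hp]
      tauto
  have hQmeas : Measurable Q := by
    refine measurable_of_Iic fun x => ?_
    rw [hpre x]
    by_cases hx : (0:ℝ) ≤ x
    · have : {p : ℝ | (0:ℝ) ≤ x} = Set.univ := eq_univ_of_forall fun _ => hx
      rw [this]
      exact (measurableSet_Ioo.inter measurableSet_Iic).union
        (measurableSet_Ioo.compl.inter MeasurableSet.univ)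
    · have : {p : ℝ | (0:ℝ) ≤ x} = ∅ := eq_empty_of_forall_notMem fun _ => hx
      rw [this]
      simp [measurableSet_Ioo.inter measurableSet_Iic]
  refine ⟨Q, hQmeas, ?_⟩
  -- measure of Ioo 0 1 ∩ Iic c for c ∈ [0,1]
  have hmeasIoo : ∀ c : ℝ, 0 ≤ c → c ≤ 1 →
      volume.restrict (Icc (0:ℝ) 1) (Ioo (0:ℝ) 1 ∩ Iic c) = ENNReal.ofReal c := by
    intro c h0 h1
    rw [Measure.restrict_apply (measurableSet_Ioo.inter measurableSet_Iic)]
    have hsub : Ioo (0:ℝ) 1 ∩ Iic c ∩ Icc 0 1 = Ioo (0:ℝ) 1 ∩ Iic c := by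
      rw [Set.inter_eq_left]
      exact fun y hy => ⟨hy.1.1.le, hy.1.2.le⟩
    rw [hsub]
    refine le_antisymm ?_ ?_
    · calc volume (Ioo (0:ℝ) 1 ∩ Iic c) ≤ volume (Ioc (0:ℝ) c) := by
            refine measure_mono fun y hy => ⟨hy.1.1, hy.2⟩
        _ = ENNReal.ofReal c := by rw [Real.volume_Ioc, sub_zero]
    · calc ENNReal.ofReal c = volume (Ioo (0:ℝ) c) := by rw [Real.volume_Ioo, sub_zero]
        _ ≤ volume (Ioo (0:ℝ) 1 ∩ Iic c) := by
            refine measure_mono fun y hy => ⟨⟨hy.1, lt_of_lt_of_le hy.2 h1⟩, hy.2.le⟩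
  have hnull : volume.restrict (Icc (0:ℝ) 1) ((Ioo (0:ℝ) 1)ᶜ) = 0 := by
    rw [Measure.restrict_apply measurableSet_Ioo.compl]
    have : (Ioo (0:ℝ) 1)ᶜ ∩ Icc 0 1 ⊆ {0, 1} := by
      intro y hy
      rcases hy with ⟨hy1, hy2⟩
      simp only [Set.mem_compl_iff, Set.mem_Ioo, not_and_or, not_lt] at hy1
      simp only [Set.mem_insert_iff, Set.mem_singleton_iff]
      rcases hy1 with h | h
      · exact Or.inl (le_antisymm h hy2.1)
      · exact Or.inr (le_antisymm hy2.2 h)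
    refine measure_mono_null this ?_
    rw [show ({0,1} : Set ℝ) = {0} ∪ {1} from rfl]
    exact measure_union_null (measure_singleton 0) (measure_singleton 1)
  refine Measure.ext_of_Iic _ _ fun x => ?_
  rw [Measure.map_apply hQmeas measurableSet_Iic, hpre x]
  have h1 : volume.restrict (Icc (0:ℝ) 1) ((Ioo (0:ℝ) 1)ᶜ ∩ {p | (0:ℝ) ≤ x}) = 0 :=
    measure_mono_null (inter_subset_left) hnull
  have h2 : volume.restrict (Icc (0:ℝ) 1)
      (Ioo (0:ℝ) 1 ∩ Iic (F x) ∪ (Ioo (0:ℝ) 1)ᶜ ∩ {p | (0:ℝ) ≤ x})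
      = volume.restrict (Icc (0:ℝ) 1) (Ioo (0:ℝ) 1 ∩ Iic (F x)) := by
    refine le_antisymm ?_ (measure_mono subset_union_left)
    calc _ ≤ volume.restrict (Icc (0:ℝ) 1) (Ioo (0:ℝ) 1 ∩ Iic (F x)) +
        volume.restrict (Icc (0:ℝ) 1) ((Ioo (0:ℝ) 1)ᶜ ∩ {p | (0:ℝ) ≤ x}) := measure_union_le _ _
      _ = _ := by rw [h1, add_zero]
  rw [h2, hmeasIoo (F x) (hF01 x).1 (hF01 x).2, ofReal_cdf]


theorem stmt12 {X : Type*} [MetricSpace X] [CompleteSpace X]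
    [TopologicalSpace.SeparableSpace X] [MeasurableSpace X] [BorelSpace X]
    (ν : Measure X) [IsProbabilityMeasure ν]
    (P : Measure (ℕ → Bool)) [IsProbabilityMeasure P]
    (hP : ∀ (n : ℕ) (b : Fin n → Bool),
      P {ω | ∀ i : Fin n, ω i = b i} = (1 / 2 : ENNReal) ^ n) :
    ∃ T : (ℕ → Bool) → X, Measurable T ∧ P.map T = ν := by
  haveI : SecondCountableTopology X := UniformSpace.secondCountable_of_separable X
  haveI : PolishSpace X := inferInstance
  haveI : StandardBorelSpace X := inferInstance
  have hne : Nonempty X := by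
    by_contra hX
    have hempty : (Set.univ : Set X) = ∅ := by
      refine eq_empty_of_forall_notMem fun x _ => hX ⟨x⟩
    have h1 := measure_univ (μ := ν)
    rw [hempty, measure_empty] at h1
    exact zero_ne_one h1
  obtain ⟨f, hf⟩ := exists_measurableEmbedding_real X
  obtain ⟨g, hgmeas, hgf⟩ := hf.exists_measurable_extend (measurable_id (α := X))
    (fun y => hne)
  haveI : IsProbabilityMeasure (ν.map f) := Measure.isProbabilityMeasure_map hf.measurable.aemeasurable
  obtain ⟨Q, hQmeas, hQmap⟩ := inv_transform (ν.map f)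
  obtain ⟨h, hhmeas, hhmap⟩ := cantor_to_unif P hP
  refine ⟨g ∘ Q ∘ h, (hgmeas.comp hQmeas).comp hhmeas, ?_⟩
  have e1 : P.map (g ∘ Q ∘ h) = (P.map h).map (g ∘ Q) :=
    (Measure.map_map (hgmeas.comp hQmeas) hhmeas).symm
  have e2 : (volume.restrict (Icc (0:ℝ) 1)).map (g ∘ Q)
      = ((volume.restrict (Icc (0:ℝ) 1)).map Q).map g :=
    (Measure.map_map hgmeas hQmeas).symm
  have e3 : (ν.map f).map g = ν.map (g ∘ f) := Measure.map_map hgmeas hf.measurable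
  rw [e1, hhmap, e2, hQmap, e3, hgf, Measure.map_id]
end

section
/- Tail bound for the Lévy–Ciesielski construction: let (A_{n,k}) for n ≥ 0, 0 ≤ k < 2ⁿ be independent standard normal random variables. Then for every m ≥ 6, P( |A_{n,k}| < n for all n ≥ m and all 0 ≤ k < 2ⁿ ) ≥ 1 − 2^{−m}. -/
open MeasureTheory ProbabilityTheory Real Set
open scoped ENNReal NNReal

lemma gauss_tail_Ici (n : ℕ) (hn : 6 ≤ n) :
    gaussianReal 0 1 (Set.Ici (n : ℝ)) ≤ ENNReal.ofReal ((4:ℝ)^(-(n:ℤ))/4) := by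
  have hn6 : (6:ℝ) ≤ n := by exact_mod_cast hn
  have hnpos : (0:ℝ) < n := by linarith
  rw [gaussianReal_apply_eq_integral 0 one_ne_zero]
  apply ENNReal.ofReal_le_ofReal
  have hb : (0:ℝ) < n/2 := by linarith
  have hint2 : IntegrableOn (fun x : ℝ => (Real.sqrt (2*π))⁻¹ * rexp (-((n:ℝ)/2) * x)) (Set.Ici (n:ℝ)) := by
    rw [integrableOn_Ici_iff_integrableOn_Ioi]
    exact (exp_neg_integrableOn_Ioi _ hb).const_mul _
  have key : ∫ x in Set.Ici (n:ℝ), gaussianPDFReal 0 1 x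
      ≤ ∫ x in Set.Ici (n:ℝ), (Real.sqrt (2*π))⁻¹ * rexp (-((n:ℝ)/2) * x) := by
    apply setIntegral_mono_on (integrable_gaussianPDFReal 0 1).integrableOn hint2 measurableSet_Ici
    intro x hx
    simp only [gaussianPDFReal, NNReal.coe_one, mul_one, sub_zero]
    apply mul_le_mul_of_nonneg_left _ (by positivity)
    apply Real.exp_le_exp.mpr
    have hx' : (n:ℝ) ≤ x := hx
    nlinarith
  refine key.trans ?_
  have hcomp : ∫ x in Set.Ici (n:ℝ), (Real.sqrt (2*π))⁻¹ * rexp (-((n:ℝ)/2) * x)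
      = (Real.sqrt (2*π))⁻¹ * (((n:ℝ)/2)⁻¹ * rexp (-((n:ℝ)/2 * n))) := by
    rw [MeasureTheory.integral_Ici_eq_integral_Ioi, integral_const_mul]
    congr 1
    have := integral_comp_mul_left_Ioi (fun u : ℝ => rexp (-u)) (n:ℝ) hb
    simp only [smul_eq_mul] at this
    simp only [neg_mul]
    rw [this, integral_exp_neg_Ioi]
  rw [hcomp]
  have hs : (2:ℝ) ≤ Real.sqrt (2*π) := by
    nlinarith [Real.sq_sqrt (by positivity : (0:ℝ) ≤ 2*π), Real.sqrt_nonneg (2*π), Real.pi_gt_three]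
  have h1 : (Real.sqrt (2*π))⁻¹ ≤ 1/2 := by
    rw [one_div]
    exact inv_anti₀ (by norm_num) hs
  have h2 : ((n:ℝ)/2)⁻¹ ≤ 1 := by
    rw [inv_le_one_iff₀]; right; linarith
  have h3 : rexp (-((n:ℝ)/2 * n)) ≤ (4:ℝ)^(-(n:ℤ))/2 := by
    have he2 : (4:ℝ) ≤ rexp 2 := by
      have h := Real.exp_one_gt_d9
      have : rexp 2 = rexp 1 * rexp 1 := by rw [← Real.exp_add]; norm_num
      nlinarith
    have hpow : (4:ℝ)^(n+1) ≤ rexp ((n:ℝ)/2 * n) := by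
      calc (4:ℝ)^(n+1) ≤ (rexp 2)^(n+1) := pow_le_pow_left₀ (by norm_num) he2 _
        _ = rexp (2*(n+1)) := by rw [← Real.exp_nat_mul]; push_cast; ring_nf
        _ ≤ rexp ((n:ℝ)/2 * n) := by apply Real.exp_le_exp.mpr; push_cast; nlinarith
    rw [Real.exp_neg]
    have hid : ((4:ℝ)^(n+1))⁻¹ = (4:ℝ)^(-(n:ℤ))/4 := by
      rw [zpow_neg, zpow_natCast, pow_succ, mul_inv]; ring
    have := inv_anti₀ (by positivity : (0:ℝ) < 4^(n+1)) hpow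
    rw [hid] at this
    have h4 : (0:ℝ) ≤ (4:ℝ)^(-(n:ℤ)) := by positivity
    linarith
  have hE : (0:ℝ) ≤ rexp (-((n:ℝ)/2 * n)) := (Real.exp_pos _).le
  have hbinv : (0:ℝ) ≤ ((n:ℝ)/2)⁻¹ := by positivity
  have hcn : (0:ℝ) ≤ (Real.sqrt (2*π))⁻¹ := by positivity
  have h5 : (0:ℝ) ≤ (4:ℝ)^(-(n:ℤ)) := by positivity
  nlinarith [mul_le_mul h2 h3 hE (by norm_num : (0:ℝ) ≤ 1),
    mul_le_mul h1 (mul_le_mul h2 h3 hE (by norm_num : (0:ℝ) ≤ 1)) (by positivity) (by norm_num : (0:ℝ) ≤ 1/2)]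

lemma gauss_symm (a : ℝ) :
    gaussianReal 0 1 (Set.Iic (-a)) = gaussianReal 0 1 (Set.Ici a) := by
  have h := gaussianReal_map_const_mul (μ := 0) (v := 1) (-1)
  have h1 : (gaussianReal 0 1).map ((-1 : ℝ) * ·) = gaussianReal 0 1 := by
    rw [h]
    norm_num
  conv_lhs => rw [← h1]
  rw [Measure.map_apply (measurable_id'.const_mul _) measurableSet_Iic]
  congr 1
  ext x
  simp only [Set.mem_preimage, Set.mem_Iic, Set.mem_Ici]
  constructor <;> intro hx <;> linarith

lemma gauss_abs_tail (n : ℕ) (hn : 6 ≤ n) :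
    gaussianReal 0 1 {x : ℝ | (n:ℝ) ≤ |x|} ≤ ENNReal.ofReal ((4:ℝ)^(-(n:ℤ))/2) := by
  have hsub : {x : ℝ | (n:ℝ) ≤ |x|} ⊆ Set.Iic (-(n:ℝ)) ∪ Set.Ici (n:ℝ) := by
    intro x hx
    have hx' : (n:ℝ) ≤ |x| := hx
    rcases le_abs.mp hx' with h | h
    · exact Or.inr h
    · exact Or.inl (by simpa using neg_le_neg h)
  calc gaussianReal 0 1 {x : ℝ | (n:ℝ) ≤ |x|}
      ≤ gaussianReal 0 1 (Set.Iic (-(n:ℝ)) ∪ Set.Ici (n:ℝ)) := measure_mono hsub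
    _ ≤ gaussianReal 0 1 (Set.Iic (-(n:ℝ))) + gaussianReal 0 1 (Set.Ici (n:ℝ)) :=
        measure_union_le _ _
    _ = gaussianReal 0 1 (Set.Ici (n:ℝ)) + gaussianReal 0 1 (Set.Ici (n:ℝ)) := by
        rw [gauss_symm]
    _ ≤ ENNReal.ofReal ((4:ℝ)^(-(n:ℤ))/4) + ENNReal.ofReal ((4:ℝ)^(-(n:ℤ))/4) :=
        add_le_add (gauss_tail_Ici n hn) (gauss_tail_Ici n hn)
    _ = ENNReal.ofReal ((4:ℝ)^(-(n:ℤ))/2) := by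
        rw [← ENNReal.ofReal_add (by positivity) (by positivity)]
        ring_nf

lemma tsum_shift_ennreal (f : ℕ → ℝ≥0∞) (m : ℕ) (h0 : ∀ n, n < m → f n = 0) :
    ∑' n, f n = ∑' j, f (j + m) := by
  refine (Function.Injective.tsum_eq (add_left_injective m) ?_).symm
  intro x hx
  rcases lt_or_ge x m with h|h
  · exact absurd (h0 x h) hx
  · exact ⟨x - m, by simp; omega⟩

theorem stmt18 {Ω : Type*} [MeasurableSpace Ω] (P : Measure Ω) [IsProbabilityMeasure P]
    (A : ℕ → ℕ → Ω → ℝ)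
    (hmeas : ∀ n k, Measurable (A n k))
    (hindep : iIndepFun
      (fun p : ℕ × ℕ => A p.1 p.2) P)
    (hgauss : ∀ n k, P.map (A n k) = gaussianReal 0 1)
    (m : ℕ) (hm : 6 ≤ m) :
    ENNReal.ofReal (1 - (2 : ℝ) ^ (-(m : ℤ))) ≤
      P {ω | ∀ n, m ≤ n → ∀ k, k < 2 ^ n → |A n k ω| < (n : ℝ)} := by
  set T : ℕ → ℕ → Set Ω := fun n k =>
    if m ≤ n ∧ k < 2^n then {ω | (n:ℝ) ≤ |A n k ω|} else ∅ with hT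
  have hTmeas : ∀ n k, MeasurableSet (T n k) := by
    intro n k
    simp only [hT]
    split_ifs
    · exact measurableSet_le measurable_const (hmeas n k).abs
    · exact MeasurableSet.empty
  set bad := ⋃ n, ⋃ k, T n k with hbad
  have hbadmeas : MeasurableSet bad :=
    MeasurableSet.iUnion fun n => MeasurableSet.iUnion fun k => hTmeas n k
  have hsub : badᶜ ⊆ {ω | ∀ n, m ≤ n → ∀ k, k < 2 ^ n → |A n k ω| < (n : ℝ)} := by
    intro ω hω n hn k hk
    by_contra hcon
    apply hω
    refine Set.mem_iUnion.mpr ⟨n, Set.mem_iUnion.mpr ⟨k, ?_⟩⟩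
    simp only [hT, if_pos (And.intro hn hk)]
    exact not_lt.mp hcon
  have hPT : ∀ n k, P (T n k) ≤
      (if m ≤ n ∧ k < 2^n then ENNReal.ofReal ((4:ℝ)^(-(n:ℤ))/2) else 0) := by
    intro n k
    by_cases h : m ≤ n ∧ k < 2^n
    · rw [if_pos h]
      simp only [hT, if_pos h]
      have hset : {ω | (n:ℝ) ≤ |A n k ω|} = A n k ⁻¹' {x : ℝ | (n:ℝ) ≤ |x|} := rfl
      rw [hset, ← Measure.map_apply (hmeas n k)
        (measurableSet_le measurable_const measurable_abs), hgauss n k]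
      exact gauss_abs_tail n (le_trans hm h.1)
    · simp [hT, if_neg h, h]
  have hkey : ∀ n : ℕ, ((2:ℕ)^n : ℝ≥0∞) * ENNReal.ofReal ((4:ℝ)^(-(n:ℤ))/2)
      = (2⁻¹ : ℝ≥0∞)^(n+1) := by
    intro n
    have hr : (2:ℝ)^n * ((4:ℝ)^(-(n:ℤ))/2) = ((2:ℝ)⁻¹)^(n+1) := by
      have h4 : (4:ℝ)^(-(n:ℤ)) = ((2:ℝ)^n * (2:ℝ)^n)⁻¹ := by
        rw [zpow_neg, zpow_natCast, show (4:ℝ) = 2*2 by norm_num, mul_pow]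
      rw [h4, inv_pow, pow_succ]
      have : ((2:ℝ)^n) ≠ 0 := by positivity
      field_simp
    have hcast : ((2:ℕ)^n : ℝ≥0∞) = ENNReal.ofReal ((2:ℝ)^n) := by
      rw [ENNReal.ofReal_pow (by norm_num)]
      norm_num
    rw [hcast, ← ENNReal.ofReal_mul (by positivity), hr,
      ENNReal.ofReal_pow (by positivity)]
    congr 1
    rw [ENNReal.ofReal_inv_of_pos (by norm_num)]
    norm_num
  have hsumk : ∀ n, (∑' k, (if m ≤ n ∧ k < 2^n then ENNReal.ofReal ((4:ℝ)^(-(n:ℤ))/2) else 0))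
      = if m ≤ n then (2⁻¹ : ℝ≥0∞)^(n+1) else 0 := by
    intro n
    by_cases hmn : m ≤ n
    · rw [if_pos hmn]
      rw [tsum_eq_sum (s := Finset.range (2^n))
        (fun k hk => if_neg (fun hcond => hk (Finset.mem_range.mpr hcond.2)))]
      rw [Finset.sum_congr rfl
        (fun k hk => if_pos ⟨hmn, Finset.mem_range.mp hk⟩), Finset.sum_const,
        Finset.card_range, nsmul_eq_mul]
      rw [← hkey n]
      norm_num
    · simp [hmn]
  have hgeom : (∑' n : ℕ, (if m ≤ n then (2⁻¹ : ℝ≥0∞)^(n+1) else 0)) = (2⁻¹ : ℝ≥0∞)^m := by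
    rw [tsum_shift_ennreal _ m (fun n hn => if_neg (by omega))]
    have h1 : ∀ j : ℕ, (if m ≤ j + m then (2⁻¹ : ℝ≥0∞)^(j + m + 1) else 0)
        = (2⁻¹ : ℝ≥0∞)^(m+1) * (2⁻¹ : ℝ≥0∞)^j := by
      intro j
      rw [if_pos (Nat.le_add_left m j), ← pow_add]
      congr 1
      omega
    rw [tsum_congr h1, ENNReal.tsum_mul_left, ENNReal.tsum_geometric,
      ENNReal.one_sub_inv_two, inv_inv, pow_succ, mul_assoc,
      ENNReal.inv_mul_cancel (by norm_num) (by norm_num), mul_one]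
  have hbadbound : P bad ≤ (2⁻¹ : ℝ≥0∞)^m := by
    calc P bad ≤ ∑' n, P (⋃ k, T n k) := measure_iUnion_le _
      _ ≤ ∑' n, ∑' k, P (T n k) := ENNReal.tsum_le_tsum fun n => measure_iUnion_le _
      _ ≤ ∑' n, ∑' k, (if m ≤ n ∧ k < 2^n then ENNReal.ofReal ((4:ℝ)^(-(n:ℤ))/2) else 0) :=
          ENNReal.tsum_le_tsum fun n => ENNReal.tsum_le_tsum fun k => hPT n k
      _ = ∑' n, (if m ≤ n then (2⁻¹ : ℝ≥0∞)^(n+1) else 0) := tsum_congr hsumk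
      _ = (2⁻¹ : ℝ≥0∞)^m := hgeom
  have hx : ENNReal.ofReal ((2:ℝ)^(-(m:ℤ))) = (2⁻¹ : ℝ≥0∞)^m := by
    rw [zpow_neg, zpow_natCast, ← inv_pow, ENNReal.ofReal_pow (by positivity)]
    congr 1
    rw [ENNReal.ofReal_inv_of_pos (by norm_num)]
    norm_num
  have hfin : ENNReal.ofReal (1 - (2:ℝ)^(-(m:ℤ))) ≤ 1 - (2⁻¹ : ℝ≥0∞)^m := by
    rw [← hx, ENNReal.ofReal_sub _ (by positivity), ENNReal.ofReal_one]
  calc ENNReal.ofReal (1 - (2:ℝ)^(-(m:ℤ))) ≤ 1 - (2⁻¹ : ℝ≥0∞)^m := hfin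
    _ ≤ 1 - P bad := tsub_le_tsub_left hbadbound 1
    _ = P badᶜ := (prob_compl_eq_one_sub hbadmeas).symm
    _ ≤ P {ω | ∀ n, m ≤ n → ∀ k, k < 2 ^ n → |A n k ω| < (n : ℝ)} := measure_mono hsub
end
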